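/- Let G be a topological group and U a symmetric open neighborhood of the identity. For every n ≥ 0, any set K with Uⁿ ⊆ K ⊆ U^{n+1} is U-connected; i.e., there is no subset A with ∅ ≠ A ≠ K and A·U ∩ K = A. -/

import Mathlib

open Set Pointwise

theorem stmt_2 {G : Type*} [Group G] [TopologicalSpace G] [IsTopologicalGroup G]
    (U : Set G) (hUopen : IsOpen U) (hUone : (1 : G) ∈ U) (hUsymm : U⁻¹ = U)
    (n : ℕ) (K : Set G) (hK₁ : U ^ n ⊆ K) (hK₂ : K ⊆ U ^ (n + 1)) :
    ¬ ∃ A : Set G, A ≠ ∅ ∧ A ≠ K ∧ A * U ∩ K = A := by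
  rintro ⟨A, hAne, hAK, hA⟩
  have hAsubK : A ⊆ K := by rw [← hA]; exact inter_subset_right
  -- U^m ⊆ U^n for m ≤ n
  have hmono : ∀ m k : ℕ, m ≤ k → (U : Set G) ^ m ⊆ U ^ k := by
    intro m k hmk
    induction k with
    | zero => simpa [Nat.le_zero.mp hmk] using subset_rfl
    | succ k ih =>
      rcases Nat.lt_or_ge m (k + 1) with h | h
      · have := ih (Nat.lt_succ_iff.mp h)
        rw [pow_succ]
        exact this.trans (Set.subset_mul_left _ hUone)
      · have : m = k + 1 := le_antisymm hmk h
        simp [this]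
  -- forward propagation
  have fwd : ∀ m : ℕ, m ≤ n + 1 → ∀ x ∈ U ^ m, x ∈ K → (1 : G) ∈ A → x ∈ A := by
    intro m
    induction m with
    | zero => intro _ x hx _ h1; rw [pow_zero, Set.mem_one] at hx; rwa [hx]
    | succ m ih =>
      intro hm x hx hxK h1
      rw [pow_succ] at hx
      rcases hx with ⟨y, hy, u, hu, rfl⟩
      have hyK : y ∈ K := hK₁ (hmono m n (Nat.succ_le_succ_iff.mp hm) hy)
      have hyA : y ∈ A := ih (le_trans (Nat.le_succ m) hm) y hy hyK h1
      rw [← hA]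
      exact ⟨⟨y, hyA, u, hu, rfl⟩, hxK⟩
  -- backward propagation
  have bwd : ∀ m : ℕ, m ≤ n + 1 → ∀ x ∈ U ^ m, x ∈ K → x ∈ A → (1 : G) ∈ A := by
    intro m
    induction m with
    | zero => intro _ x hx _ hxA; rw [pow_zero, Set.mem_one] at hx; rwa [← hx]
    | succ m ih =>
      intro hm x hx hxK hxA
      rw [pow_succ] at hx
      rcases hx with ⟨y, hy, u, hu, rfl⟩
      have hyK : y ∈ K := hK₁ (hmono m n (Nat.succ_le_succ_iff.mp hm) hy)
      have huinv : u⁻¹ ∈ U := by rw [← hUsymm]; exact Set.inv_mem_inv.mpr hu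
      have hyA : y ∈ A := by
        rw [← hA]
        exact ⟨⟨y * u, hxA, u⁻¹, huinv, by group⟩, hyK⟩
      exact ih (le_trans (Nat.le_succ m) hm) y hy hyK hyA
  -- A nonempty gives 1 ∈ A
  rcases Set.nonempty_iff_ne_empty.mpr hAne with ⟨a, haA⟩
  have haK : a ∈ K := hAsubK haA
  have h1A : (1 : G) ∈ A := bwd (n + 1) le_rfl a (hK₂ haK) haK haA
  exact hAK (le_antisymm hAsubK fun k hk => fwd (n + 1) le_rfl k (hK₂ hk) hk h1A)
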